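/- Let q ∈ ℕ with q ≥ 2, let t > 1 and z > 0, and consider the second iterate R²_{z,t,q}(w) = R_{z,t,q}(R_{z,t,q}(w)) as a function of w ∈ [0,∞). Then: (i) R²_{z,t,q} is strictly increasing on [0,∞); (ii) R²_{z,t,q} has at least one fixed point in [0,∞); and (iii) R²_{z,t,q}([0,∞)) ⊆ [c,d] where c = R²_{z,t,q}(0) > 0 and d = lim_{w→∞} R²_{z,t,q}(w) is finite and positive, with c < d. -/

import Mathlib

noncomputable section

/-- The renormalization map `R_{z,t,q}(w) = z·((t + w + (q−2)tw)/(1 + (q−1)tw))²`,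
viewed as a function of the real variable `w`. -/
def Rmap (z t q : ℝ) (w : ℝ) : ℝ :=
  z * ((t + w + (q - 2) * t * w) / (1 + (q - 1) * t * w)) ^ 2

/-- The second iterate `R²_{z,t,q}(w) = R_{z,t,q}(R_{z,t,q}(w))`. -/
def Rmap2 (z t q : ℝ) (w : ℝ) : ℝ := Rmap z t q (Rmap z t q w)

/-- **Lemma (properties of the second iterate, antiferromagnetic case).**
For `q ≥ 2` a natural number, `t > 1`, and `z > 0`:
(i) `R²_{z,t,q}` is strictly increasing on `[0,∞)`;
(ii) `R²_{z,t,q}` has a fixed point in `[0,∞)`;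
(iii) `R²_{z,t,q}([0,∞)) ⊆ [c,d]` where `c = R²_{z,t,q}(0) > 0` and
`d = lim_{w→∞} R²_{z,t,q}(w)` is finite and positive, with `c < d`. -/
theorem renorm_second_iterate_properties
    (q : ℕ) (hq : 2 ≤ q) (t : ℝ) (ht : 1 < t) (z : ℝ) (hz : 0 < z) :
    StrictMonoOn (Rmap2 z t q) (Set.Ici 0) ∧
    (∃ w ∈ Set.Ici (0 : ℝ), Rmap2 z t q w = w) ∧
    (∃ d : ℝ, Filter.Tendsto (Rmap2 z t q) Filter.atTop (nhds d) ∧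
      0 < Rmap2 z t q 0 ∧ Rmap2 z t q 0 < d ∧
      ∀ w ∈ Set.Ici (0 : ℝ), Rmap2 z t q w ∈ Set.Icc (Rmap2 z t q 0) d) := by
  have hq2 : (2:ℝ) ≤ (q:ℝ) := by exact_mod_cast hq
  have ht0 : (0:ℝ) < t := by linarith
  have hCt : 0 < ((q:ℝ)-1)*t := by nlinarith
  have hNum : 0 < 1 + ((q:ℝ)-2)*t := by nlinarith
  set L : ℝ := (1 + ((q:ℝ)-2)*t) / (((q:ℝ)-1)*t) with hLdef
  have hL : 0 < L := div_pos hNum hCt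
  have hKey : 1 + ((q:ℝ)-2)*t < ((q:ℝ)-1)*t*t := by
    nlinarith [mul_pos (show (0:ℝ) < t-1 by linarith)
      (show (0:ℝ) < ((q:ℝ)-1)*t+1 by nlinarith)]
  have hD : ∀ w:ℝ, 0 ≤ w → 0 < 1 + ((q:ℝ)-1)*t*w := by
    intro w hw; nlinarith [mul_nonneg hCt.le hw]
  set f : ℝ → ℝ := fun w => (t + w + ((q:ℝ)-2)*t*w) / (1 + ((q:ℝ)-1)*t*w) with hfdef
  have hfL : ∀ w:ℝ, 0 ≤ w → L < f w := by
    intro w hw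
    rw [hfdef, hLdef]
    simp only
    rw [div_lt_div_iff₀ hCt (hD w hw)]
    nlinarith [mul_nonneg (mul_nonneg (sub_pos.mpr hKey).le hCt.le) hw,
      mul_nonneg (sub_pos.mpr hKey).le hw]
  have hf0 : ∀ w:ℝ, 0 ≤ w → 0 < f w := fun w hw => lt_trans hL (hfL w hw)
  have hfanti : ∀ w1 w2:ℝ, 0 ≤ w1 → w1 < w2 → f w2 < f w1 := by
    intro w1 w2 h1 h12
    have h2 : (0:ℝ) ≤ w2 := by linarith
    rw [hfdef]
    simp only
    rw [div_lt_div_iff₀ (hD w2 h2) (hD w1 h1)]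
    nlinarith [mul_pos (show (0:ℝ) < w2 - w1 by linarith)
      (show (0:ℝ) < ((q:ℝ)-1)*t*t - (1+((q:ℝ)-2)*t) by linarith)]
  have hReq : ∀ w:ℝ, Rmap z t ↑q w = z * (f w)^2 := fun w => rfl
  have hRpos : ∀ w:ℝ, 0 ≤ w → 0 < Rmap z t ↑q w := by
    intro w hw
    rw [hReq]
    exact mul_pos hz (pow_pos (hf0 w hw) 2)
  have hRgt : ∀ w:ℝ, 0 ≤ w → z * L^2 < Rmap z t ↑q w := by
    intro w hw
    rw [hReq]
    exact mul_lt_mul_of_pos_left (pow_lt_pow_left₀ (hfL w hw) hL.le (by norm_num)) hz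
  have hm : 0 < z * L^2 := mul_pos hz (pow_pos hL 2)
  have hRanti : ∀ w1 w2:ℝ, 0 ≤ w1 → w1 < w2 → Rmap z t ↑q w2 < Rmap z t ↑q w1 := by
    intro w1 w2 h1 h12
    rw [hReq, hReq]
    exact mul_lt_mul_of_pos_left
      (pow_lt_pow_left₀ (hfanti w1 w2 h1 h12) (hf0 w2 (by linarith)).le (by norm_num)) hz
  have hmono : StrictMonoOn (Rmap2 z t ↑q) (Set.Ici 0) := by
    intro w1 h1 w2 h2 h12
    have ha := hRanti w1 w2 h1 h12
    exact hRanti _ _ (hRpos w2 h2).le ha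
  -- limit of f at infinity
  have hflim : Filter.Tendsto f Filter.atTop (nhds L) := by
    have hn : Filter.Tendsto (fun w:ℝ => t*w⁻¹ + (1+((q:ℝ)-2)*t)) Filter.atTop
        (nhds (1+((q:ℝ)-2)*t)) := by
      have h := (tendsto_inv_atTop_zero.const_mul t).add
        (tendsto_const_nhds : Filter.Tendsto (fun _:ℝ => 1+((q:ℝ)-2)*t) Filter.atTop
          (nhds (1+((q:ℝ)-2)*t)))
      simpa using h
    have hd : Filter.Tendsto (fun w:ℝ => w⁻¹ + ((q:ℝ)-1)*t) Filter.atTop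
        (nhds (((q:ℝ)-1)*t)) := by
      have h := tendsto_inv_atTop_zero.add
        (tendsto_const_nhds : Filter.Tendsto (fun _:ℝ => ((q:ℝ)-1)*t) Filter.atTop
          (nhds (((q:ℝ)-1)*t)))
      simpa using h
    have h1 : Filter.Tendsto (fun w:ℝ => (t*w⁻¹ + (1+((q:ℝ)-2)*t)) / (w⁻¹ + ((q:ℝ)-1)*t))
        Filter.atTop (nhds L) := hn.div hd (ne_of_gt hCt)
    refine Filter.Tendsto.congr' ?_ h1
    filter_upwards [Filter.eventually_gt_atTop (0:ℝ)] with w hw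
    have hw0 : w ≠ 0 := ne_of_gt hw
    have hd2 : (1 + ((q:ℝ)-1)*t*w) ≠ 0 := (hD w hw.le).ne'
    have hd1 : (w⁻¹ + ((q:ℝ)-1)*t) ≠ 0 := by positivity
    rw [hfdef]
    simp only
    field_simp
    ring
  have hRlim : Filter.Tendsto (Rmap z t ↑q) Filter.atTop (nhds (z * L^2)) :=
    (hflim.pow 2).const_mul z
  have hRcont : ∀ x:ℝ, 0 ≤ x → ContinuousAt (Rmap z t ↑q) x := by
    intro x hx
    have hdx : (1 + ((q:ℝ)-1)*t*x) ≠ 0 := (hD x hx).ne'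
    unfold Rmap
    apply ContinuousAt.mul continuousAt_const
    apply ContinuousAt.pow
    exact ContinuousAt.div (by fun_prop) (by fun_prop) hdx
  set d : ℝ := Rmap z t ↑q (z * L^2) with hddef
  have hR2lim : Filter.Tendsto (Rmap2 z t ↑q) Filter.atTop (nhds d) :=
    (hRcont _ hm.le).tendsto.comp hRlim
  have hd0 : 0 < d := hRpos _ hm.le
  have hR2ltd : ∀ w:ℝ, 0 ≤ w → Rmap2 z t ↑q w < d := by
    intro w hw
    exact hRanti _ _ hm.le (hRgt w hw)
  have hc : 0 < Rmap2 z t ↑q 0 := hRpos _ (hRpos 0 le_rfl).le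
  have hcd : Rmap2 z t ↑q 0 < d := hR2ltd 0 le_rfl
  refine ⟨hmono, ?_, d, hR2lim, hc, hcd, ?_⟩
  · -- fixed point via IVT
    have hcont2 : ContinuousOn (Rmap2 z t ↑q) (Set.Icc 0 d) := by
      intro x hx
      have h1 : ContinuousAt (Rmap2 z t ↑q) x :=
        (hRcont _ (hRpos x hx.1).le).comp (hRcont x hx.1)
      exact h1.continuousWithinAt
    have hgc : ContinuousOn (fun w => Rmap2 z t ↑q w - w) (Set.Icc 0 d) :=
      hcont2.sub continuousOn_id
    have hsub := intermediate_value_Icc' hd0.le hgc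
    have h0mem : (0:ℝ) ∈ Set.Icc (Rmap2 z t ↑q d - d) (Rmap2 z t ↑q 0 - 0) :=
      ⟨by linarith [hR2ltd d hd0.le], by linarith⟩
    obtain ⟨x, hx, hfx⟩ := hsub h0mem
    have hfx' : Rmap2 z t ↑q x - x = 0 := hfx
    exact ⟨x, hx.1, by linarith⟩
  · intro w hw
    have hw0 : (0:ℝ) ≤ w := hw
    constructor
    · rcases eq_or_lt_of_le hw0 with h | h
      · rw [← h]
      · exact (hmono (Set.mem_Ici.mpr (le_refl (0:ℝ))) hw h).le
    · exact (hR2ltd w hw0).le
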